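/- Let Y, Δ : Ω → {0,1} be measurable, assume that Δ and Y are conditionally independent given σ(X), and let g : 𝒳 → (0,1] be measurable such that g ∘ X is a version of the conditional expectation E[Δ ∣ σ(X)], with g(X) > 0 almost surely. Define U := Δ Y. Then for every measurable f : 𝒳 → {0,1}, P( Y = f(X) ) = E[ (Δ / g(X)) · 1{ U = f(X) } ]; that is, under missingness at random and positivity, the classification accuracy of f is identified by an observed-data functional depending only on (X, Δ, U). -/

import Mathlib

open MeasureTheory ProbabilityTheory Filter Topology

/-- Auxiliary identification lemma: if `A`'s conditional probability given `mX` is `G`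
(valued in `(0,1]`, `mX`-measurable) and the conditional-independence factorizations and
pointwise decompositions below hold, then `P B = ∫ 1_{A∩B} / G`. -/
theorem stmt17_aux {Ω : Type*} (mX : MeasurableSpace Ω) [mΩ : MeasurableSpace Ω]
    (hmX : mX ≤ mΩ) (P : Measure Ω) [IsProbabilityMeasure P]
    (A B B1 B0 C : Set Ω)
    (hAm : MeasurableSet A) (hBm : MeasurableSet B) (hB1m : MeasurableSet B1)
    (hB0m : MeasurableSet B0) (hCmX : MeasurableSet[mX] C)
    (G : Ω → ℝ) (hG : Measurable[mX] G) (hGmem : ∀ ω, G ω ∈ Set.Ioc (0 : ℝ) 1)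
    (hgA : (P⟦A | mX⟧) =ᵐ[P] G)
    (hciA1 : (P⟦A ∩ B1 | mX⟧) =ᵐ[P] fun ω => (P⟦A | mX⟧) ω * (P⟦B1 | mX⟧) ω)
    (hciA0 : (P⟦A ∩ B0 | mX⟧) =ᵐ[P] fun ω => (P⟦A | mX⟧) ω * (P⟦B0 | mX⟧) ω)
    (dec1 : (A ∩ B).indicator (fun _ => (1 : ℝ)) =
      fun ω => C.indicator (fun _ => (1 : ℝ)) ω * (A ∩ B1).indicator (fun _ => (1 : ℝ)) ω
        + Cᶜ.indicator (fun _ => (1 : ℝ)) ω * (A ∩ B0).indicator (fun _ => (1 : ℝ)) ω)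
    (dec2 : B.indicator (fun _ => (1 : ℝ)) =
      fun ω => C.indicator (fun _ => (1 : ℝ)) ω * B1.indicator (fun _ => (1 : ℝ)) ω
        + Cᶜ.indicator (fun _ => (1 : ℝ)) ω * B0.indicator (fun _ => (1 : ℝ)) ω) :
    (P B).toReal = ∫ ω, (A ∩ B).indicator (fun _ => (1 : ℝ)) ω * (1 / G ω) ∂P := by
  classical
  have hGpos : ∀ ω, 0 < G ω := fun ω => (hGmem ω).1
  have hCm : MeasurableSet C := hmX _ hCmX
  have hind : ∀ (s : Set Ω), MeasurableSet s →
      Integrable (s.indicator fun _ => (1 : ℝ)) P :=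
    fun s hs => (integrable_const (1 : ℝ)).indicator hs
  have hbnd : ∀ (s : Set Ω) (ω : Ω), ‖s.indicator (fun _ => (1 : ℝ)) ω‖ ≤ 1 := by
    intro s ω
    by_cases h : ω ∈ s <;> simp [Set.indicator_of_mem, Set.indicator_of_notMem, h]
  have hindnn : ∀ (s : Set Ω) (ω : Ω), 0 ≤ s.indicator (fun _ => (1 : ℝ)) ω := by
    intro s ω
    by_cases h : ω ∈ s <;> simp [Set.indicator_of_mem, Set.indicator_of_notMem, h]
  have hCs : StronglyMeasurable[mX] (C.indicator fun _ => (1 : ℝ)) :=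
    stronglyMeasurable_const.indicator hCmX
  have hCcs : StronglyMeasurable[mX] (Cᶜ.indicator fun _ => (1 : ℝ)) :=
    stronglyMeasurable_const.indicator hCmX.compl
  have hCae : AEStronglyMeasurable (C.indicator fun _ => (1 : ℝ)) P :=
    (measurable_const.indicator hCm).aestronglyMeasurable
  have hCcae : AEStronglyMeasurable (Cᶜ.indicator fun _ => (1 : ℝ)) P :=
    (measurable_const.indicator hCm.compl).aestronglyMeasurable
  -- the key conditional expectation identity
  have hL2 : (P⟦A ∩ B | mX⟧) =ᵐ[P] fun ω => G ω * (P⟦B | mX⟧) ω := by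
    have h1 := condExp_stronglyMeasurable_mul_of_bound hmX hCs
      (hind _ (hAm.inter hB1m)) 1 (Eventually.of_forall (hbnd C))
    have h0 := condExp_stronglyMeasurable_mul_of_bound hmX hCcs
      (hind _ (hAm.inter hB0m)) 1 (Eventually.of_forall (hbnd Cᶜ))
    have h1' := condExp_stronglyMeasurable_mul_of_bound hmX hCs
      (hind _ hB1m) 1 (Eventually.of_forall (hbnd C))
    have h0' := condExp_stronglyMeasurable_mul_of_bound hmX hCcs
      (hind _ hB0m) 1 (Eventually.of_forall (hbnd Cᶜ))
    have hadd : (P⟦A ∩ B | mX⟧) =ᵐ[P]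
        P[(C.indicator fun _ => (1:ℝ)) * ((A ∩ B1).indicator fun _ => (1:ℝ)) | mX]
        + P[(Cᶜ.indicator fun _ => (1:ℝ)) * ((A ∩ B0).indicator fun _ => (1:ℝ)) | mX] := by
      have heq : (A ∩ B).indicator (fun _ => (1 : ℝ)) =
          (C.indicator fun _ => (1:ℝ)) * ((A ∩ B1).indicator fun _ => (1:ℝ))
          + (Cᶜ.indicator fun _ => (1:ℝ)) * ((A ∩ B0).indicator fun _ => (1:ℝ)) := by
        funext ω; exact congrFun dec1 ω
      rw [heq]
      exact condExp_add
        ((hind _ (hAm.inter hB1m)).bdd_mul hCae (Eventually.of_forall (hbnd C)))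
        ((hind _ (hAm.inter hB0m)).bdd_mul hCcae (Eventually.of_forall (hbnd Cᶜ))) mX
    have haddB : (P⟦B | mX⟧) =ᵐ[P]
        P[(C.indicator fun _ => (1:ℝ)) * (B1.indicator fun _ => (1:ℝ)) | mX]
        + P[(Cᶜ.indicator fun _ => (1:ℝ)) * (B0.indicator fun _ => (1:ℝ)) | mX] := by
      have heq : B.indicator (fun _ => (1 : ℝ)) =
          (C.indicator fun _ => (1:ℝ)) * (B1.indicator fun _ => (1:ℝ))
          + (Cᶜ.indicator fun _ => (1:ℝ)) * (B0.indicator fun _ => (1:ℝ)) := by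
        funext ω; exact congrFun dec2 ω
      rw [heq]
      exact condExp_add
        ((hind _ hB1m).bdd_mul hCae (Eventually.of_forall (hbnd C)))
        ((hind _ hB0m).bdd_mul hCcae (Eventually.of_forall (hbnd Cᶜ))) mX
    filter_upwards [hadd, haddB, h1, h0, h1', h0', hciA1, hciA0, hgA] with ω
      e1 e2 e3 e4 e5 e6 e7 e8 e9
    rw [e1, Pi.add_apply, e3, e4, Pi.mul_apply, Pi.mul_apply, e7, e8]
    have e2' : (P⟦B | mX⟧) ω =
        C.indicator (fun _ => (1:ℝ)) ω * (P⟦B1 | mX⟧) ω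
        + Cᶜ.indicator (fun _ => (1:ℝ)) ω * (P⟦B0 | mX⟧) ω := by
      rw [e2, Pi.add_apply, e5, e6, Pi.mul_apply, Pi.mul_apply]
    rw [e2', e9]
    ring
  -- truncated weights
  have hHmeas : ∀ n : ℕ, Measurable[mX] (fun ω => min (1 / G ω) (n : ℝ)) := fun n =>
    (hG.const_div 1).min measurable_const
  have hHnonneg : ∀ (n : ℕ) ω, 0 ≤ min (1 / G ω) (n : ℝ) := fun n ω =>
    le_min (le_of_lt (one_div_pos.mpr (hGpos ω))) (Nat.cast_nonneg n)
  have hHbdd : ∀ (n : ℕ) ω, ‖min (1 / G ω) (n : ℝ)‖ ≤ (n : ℝ) := by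
    intro n ω
    rw [Real.norm_eq_abs, abs_of_nonneg (hHnonneg n ω)]
    exact min_le_right _ _
  have hHaesm : ∀ n : ℕ, AEStronglyMeasurable (fun ω => min (1 / G ω) (n : ℝ)) P :=
    fun n => ((hHmeas n).mono hmX le_rfl).aestronglyMeasurable
  -- per-n integral identity
  have key : ∀ n : ℕ, ∫ ω, (A ∩ B).indicator (fun _ => (1:ℝ)) ω * min (1 / G ω) (n : ℝ) ∂P
      = ∫ ω, (G ω * min (1 / G ω) (n : ℝ)) * (P⟦B | mX⟧) ω ∂P := by
    intro n
    have hint : Integrable ((A ∩ B).indicator fun _ => (1:ℝ)) P := hind _ (hAm.inter hBm)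
    have hmul := condExp_stronglyMeasurable_mul_of_bound hmX
      (hHmeas n).stronglyMeasurable hint n (Eventually.of_forall (hHbdd n))
    calc ∫ ω, (A ∩ B).indicator (fun _ => (1:ℝ)) ω * min (1 / G ω) (n : ℝ) ∂P
        = ∫ ω, ((fun ω => min (1 / G ω) (n : ℝ)) * ((A ∩ B).indicator fun _ => (1:ℝ))) ω ∂P := by
          refine integral_congr_ae (Eventually.of_forall fun ω => ?_)
          simp [mul_comm]
      _ = ∫ ω, (P[(fun ω => min (1 / G ω) (n : ℝ)) * ((A ∩ B).indicator fun _ => (1:ℝ)) | mX]) ω ∂P :=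
          (integral_condExp hmX).symm
      _ = ∫ ω, min (1 / G ω) (n : ℝ) * (P⟦A ∩ B | mX⟧) ω ∂P :=
          integral_congr_ae hmul
      _ = ∫ ω, (G ω * min (1 / G ω) (n : ℝ)) * (P⟦B | mX⟧) ω ∂P := by
          refine integral_congr_ae ?_
          filter_upwards [hL2] with ω e
          rw [e]; ring
  have hφint : Integrable (P⟦B | mX⟧) P := integrable_condExp
  -- limit of the right-hand sides
  have hGH01 : ∀ (n : ℕ) ω, 0 ≤ G ω * min (1 / G ω) (n : ℝ) ∧ G ω * min (1 / G ω) (n : ℝ) ≤ 1 := by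
    intro n ω
    constructor
    · exact mul_nonneg (hGpos ω).le (hHnonneg n ω)
    · rcases le_total (1 / G ω) (n : ℝ) with h | h
      · rw [min_eq_left h, mul_one_div, div_self (hGpos ω).ne']
      · rw [min_eq_right h]
        calc G ω * n ≤ G ω * (1 / G ω) := mul_le_mul_of_nonneg_left h (hGpos ω).le
          _ = 1 := by rw [mul_one_div, div_self (hGpos ω).ne']
  have hGHlim : ∀ ω, Tendsto (fun n : ℕ => G ω * min (1 / G ω) (n : ℝ)) atTop (𝓝 1) := by
    intro ω
    have hev : ∀ᶠ n : ℕ in atTop, G ω * min (1 / G ω) (n : ℝ) = 1 := by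
      filter_upwards [eventually_ge_atTop (Nat.ceil (1 / G ω))] with n hn
      rw [min_eq_left ((Nat.le_ceil _).trans (Nat.cast_le.mpr hn)), mul_one_div,
        div_self (hGpos ω).ne']
    exact Tendsto.congr' (EventuallyEq.symm hev) tendsto_const_nhds
  have hrhs : Tendsto
      (fun n : ℕ => ∫ ω, (G ω * min (1 / G ω) (n : ℝ)) * (P⟦B | mX⟧) ω ∂P) atTop
      (𝓝 (∫ ω, (P⟦B | mX⟧) ω ∂P)) := by
    refine tendsto_integral_of_dominated_convergence (fun ω => ‖(P⟦B | mX⟧) ω‖)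
      (fun n => ?_) hφint.norm (fun n => ?_) ?_
    · exact (((hG.mono hmX le_rfl).mul ((hHmeas n).mono hmX le_rfl)).mul
        (stronglyMeasurable_condExp.mono hmX).measurable).aestronglyMeasurable
    · refine Eventually.of_forall fun ω => ?_
      rw [norm_mul]
      calc ‖G ω * min (1 / G ω) (n : ℝ)‖ * ‖(P⟦B | mX⟧) ω‖
          ≤ 1 * ‖(P⟦B | mX⟧) ω‖ := by
            refine mul_le_mul_of_nonneg_right ?_ (norm_nonneg _)
            rw [Real.norm_eq_abs, abs_of_nonneg (hGH01 n ω).1]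
            exact (hGH01 n ω).2
        _ = ‖(P⟦B | mX⟧) ω‖ := one_mul _
    · refine Eventually.of_forall fun ω => ?_
      simpa using (hGHlim ω).mul_const ((P⟦B | mX⟧) ω)
  have hintB : ∫ ω, (P⟦B | mX⟧) ω ∂P = (P B).toReal := by
    rw [integral_condExp hmX]
    exact integral_indicator_one hBm
  -- integrability of the truncated integrands, and lintegral convergence
  have hFn_nonneg : ∀ (n : ℕ) ω, 0 ≤ (A ∩ B).indicator (fun _ => (1:ℝ)) ω * min (1 / G ω) (n : ℝ) :=
    fun n ω => mul_nonneg (hindnn _ ω) (hHnonneg n ω)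
  have hFn_int : ∀ n : ℕ,
      Integrable (fun ω => (A ∩ B).indicator (fun _ => (1:ℝ)) ω * min (1 / G ω) (n : ℝ)) P := by
    intro n
    have := Integrable.bdd_mul (f := (A ∩ B).indicator fun _ => (1:ℝ))
      (g := fun ω => min (1 / G ω) (n : ℝ))
      (by
        refine ⟨hHaesm n, ?_⟩
        refine (hasFiniteIntegral_const (n : ℝ)).mono' ?_
        exact Eventually.of_forall fun ω => hHbdd n ω)
      (measurable_const.indicator (hAm.inter hBm)).aestronglyMeasurable
      (Eventually.of_forall (hbnd _))
    exact this
  have hlin : Tendsto (fun n : ℕ => ∫⁻ ω, ENNReal.ofReal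
        ((A ∩ B).indicator (fun _ => (1:ℝ)) ω * min (1 / G ω) (n : ℝ)) ∂P) atTop
      (𝓝 (∫⁻ ω, ENNReal.ofReal ((A ∩ B).indicator (fun _ => (1:ℝ)) ω * (1 / G ω)) ∂P)) := by
    refine lintegral_tendsto_of_tendsto_of_monotone (fun n => ?_) ?_ ?_
    · exact (ENNReal.measurable_ofReal.comp
        ((measurable_const.indicator (hAm.inter hBm)).mul ((hHmeas n).mono hmX le_rfl))).aemeasurable
    · refine Eventually.of_forall fun ω => fun i j hij => ?_
      apply ENNReal.ofReal_le_ofReal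
      exact mul_le_mul_of_nonneg_left (min_le_min le_rfl (Nat.cast_le.mpr hij)) (hindnn _ ω)
    · refine Eventually.of_forall fun ω => ?_
      apply ENNReal.tendsto_ofReal
      have hev : ∀ᶠ n : ℕ in atTop, (A ∩ B).indicator (fun _ => (1:ℝ)) ω * min (1 / G ω) (n : ℝ)
          = (A ∩ B).indicator (fun _ => (1:ℝ)) ω * (1 / G ω) := by
        filter_upwards [eventually_ge_atTop (Nat.ceil (1 / G ω))] with n hn
        rw [min_eq_left ((Nat.le_ceil _).trans (Nat.cast_le.mpr hn))]
      exact Tendsto.congr' (EventuallyEq.symm hev) tendsto_const_nhds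
  -- identify the limits
  have hofReal : ∀ n : ℕ, ∫⁻ ω, ENNReal.ofReal
        ((A ∩ B).indicator (fun _ => (1:ℝ)) ω * min (1 / G ω) (n : ℝ)) ∂P
      = ENNReal.ofReal (∫ ω, (A ∩ B).indicator (fun _ => (1:ℝ)) ω * min (1 / G ω) (n : ℝ) ∂P) :=
    fun n => (ofReal_integral_eq_lintegral_ofReal (hFn_int n)
      (Eventually.of_forall (hFn_nonneg n))).symm
  have hlim2 : Tendsto (fun n : ℕ => ∫⁻ ω, ENNReal.ofReal
        ((A ∩ B).indicator (fun _ => (1:ℝ)) ω * min (1 / G ω) (n : ℝ)) ∂P) atTop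
      (𝓝 (ENNReal.ofReal ((P B).toReal))) := by
    simp_rw [hofReal, key]
    rw [← hintB]
    exact (ENNReal.continuous_ofReal.tendsto _).comp hrhs
  have hlfin : ∫⁻ ω, ENNReal.ofReal ((A ∩ B).indicator (fun _ => (1:ℝ)) ω * (1 / G ω)) ∂P
      = ENNReal.ofReal ((P B).toReal) := tendsto_nhds_unique hlin hlim2
  have hFnn : 0 ≤ᵐ[P] fun ω => (A ∩ B).indicator (fun _ => (1:ℝ)) ω * (1 / G ω) :=
    Eventually.of_forall fun ω => mul_nonneg (hindnn _ ω) (one_div_pos.mpr (hGpos ω)).le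
  have hFaesm : AEStronglyMeasurable (fun ω => (A ∩ B).indicator (fun _ => (1:ℝ)) ω * (1 / G ω)) P :=
    ((measurable_const.indicator (hAm.inter hBm)).mul
      ((hG.mono hmX le_rfl).const_div 1)).aestronglyMeasurable
  rw [integral_eq_lintegral_of_nonneg_ae hFnn hFaesm, hlfin, ENNReal.toReal_ofReal ENNReal.toReal_nonneg]

/-- Under missingness at random (`Δ ⫫ Y ∣ σ(X)`) and positivity (`g ∘ X`, a version of
`E[Δ ∣ σ(X)]`, takes values in `(0,1]`), for every measurable `{0,1}`-valued `f`, with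
`U := Δ Y`, the classification accuracy is identified by the observed-data functional:
`P(Y = f(X)) = E[(Δ / g(X)) · 1{U = f(X)}]`. -/
theorem stmt17 {Ω 𝒳 : Type*} [MeasurableSpace Ω] [StandardBorelSpace Ω] [Nonempty Ω]
    [MeasurableSpace 𝒳] [StandardBorelSpace 𝒳]
    (P : Measure Ω) [IsProbabilityMeasure P]
    (X : Ω → 𝒳) (hX : Measurable X)
    (Y Δ : Ω → ℝ) (hY : Measurable Y) (hΔ : Measurable Δ)
    (hY01 : ∀ ω, Y ω = 0 ∨ Y ω = 1) (hΔ01 : ∀ ω, Δ ω = 0 ∨ Δ ω = 1)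
    (hci : CondIndepFun (MeasurableSpace.comap X inferInstance) hX.comap_le Δ Y P)
    (g : 𝒳 → ℝ) (hg : Measurable g) (hgmem : ∀ x, g x ∈ Set.Ioc (0 : ℝ) 1)
    (hgpos : ∀ᵐ ω ∂P, 0 < g (X ω))
    (hgcond : (fun ω => g (X ω)) =ᵐ[P] P[Δ | MeasurableSpace.comap X inferInstance])
    (U : Ω → ℝ) (hU : ∀ ω, U ω = Δ ω * Y ω)
    (f : 𝒳 → ℝ) (hf : Measurable f) (hf01 : ∀ x, f x = 0 ∨ f x = 1) :
    (P {ω | Y ω = f (X ω)}).toReal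
      = ∫ ω, (Δ ω / g (X ω)) *
          Set.indicator {ω | U ω = f (X ω)} (fun _ => (1 : ℝ)) ω ∂P := by
  classical
  have hgpos' : ∀ x, 0 < g x := fun x => (hgmem x).1
  have hfX : Measurable fun ω => f (X ω) := hf.comp hX
  have hAm : MeasurableSet (Δ ⁻¹' {1}) := hΔ (measurableSet_singleton 1)
  have hBm : MeasurableSet {ω | Y ω = f (X ω)} := measurableSet_eq_fun hY hfX
  have hB1m : MeasurableSet (Y ⁻¹' {1}) := hY (measurableSet_singleton 1)
  have hB0m : MeasurableSet (Y ⁻¹' {0}) := hY (measurableSet_singleton 0)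
  have hCmX : MeasurableSet[MeasurableSpace.comap X inferInstance] (X ⁻¹' (f ⁻¹' {1})) :=
    ⟨f ⁻¹' {1}, hf (measurableSet_singleton 1), rfl⟩
  have hgXmX : Measurable[MeasurableSpace.comap X inferInstance] fun ω => g (X ω) :=
    hg.comp (measurable_iff_comap_le.mpr le_rfl)
  have hΔeq : Δ = (Δ ⁻¹' {1}).indicator fun _ => (1 : ℝ) := by
    funext ω
    rcases hΔ01 ω with h | h
    · have hne : ω ∉ Δ ⁻¹' {1} := by simp [h]
      simp [Set.indicator_of_notMem hne, h]
    · have hmem : ω ∈ Δ ⁻¹' {1} := by simp [h]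
      simp [Set.indicator_of_mem hmem, h]
  have hgA : (P⟦Δ ⁻¹' {1} | MeasurableSpace.comap X inferInstance⟧) =ᵐ[P]
      fun ω => g (X ω) := by
    nth_rewrite 1 [hΔeq] at hgcond
    exact hgcond.symm
  have hci' := (condIndepFun_iff_condExp_inter_preimage_eq_mul (μ := P)
      (hm' := hX.comap_le) hΔ hY).mp hci
  have hciA1 : (P⟦Δ ⁻¹' {1} ∩ Y ⁻¹' {1} | MeasurableSpace.comap X inferInstance⟧) =ᵐ[P]
      fun ω => (P⟦Δ ⁻¹' {1} | MeasurableSpace.comap X inferInstance⟧) ω *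
        (P⟦Y ⁻¹' {1} | MeasurableSpace.comap X inferInstance⟧) ω :=
    hci' {1} {1} (measurableSet_singleton 1) (measurableSet_singleton 1)
  have hciA0 : (P⟦Δ ⁻¹' {1} ∩ Y ⁻¹' {0} | MeasurableSpace.comap X inferInstance⟧) =ᵐ[P]
      fun ω => (P⟦Δ ⁻¹' {1} | MeasurableSpace.comap X inferInstance⟧) ω *
        (P⟦Y ⁻¹' {0} | MeasurableSpace.comap X inferInstance⟧) ω :=
    hci' {1} {0} (measurableSet_singleton 1) (measurableSet_singleton 0)
  have dec1 : (Δ ⁻¹' {1} ∩ {ω | Y ω = f (X ω)}).indicator (fun _ => (1 : ℝ)) =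
      fun ω => (X ⁻¹' (f ⁻¹' {1})).indicator (fun _ => (1 : ℝ)) ω *
          (Δ ⁻¹' {1} ∩ Y ⁻¹' {1}).indicator (fun _ => (1 : ℝ)) ω
        + (X ⁻¹' (f ⁻¹' {1}))ᶜ.indicator (fun _ => (1 : ℝ)) ω *
          (Δ ⁻¹' {1} ∩ Y ⁻¹' {0}).indicator (fun _ => (1 : ℝ)) ω := by
    funext ω
    rcases hf01 (X ω) with hfx | hfx <;> rcases hY01 ω with hy | hy <;>
      simp [Set.indicator_apply, Set.mem_inter_iff, Set.mem_preimage,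
        Set.mem_singleton_iff, Set.mem_setOf_eq, Set.mem_compl_iff, hfx, hy]
  have dec2 : ({ω | Y ω = f (X ω)} : Set Ω).indicator (fun _ => (1 : ℝ)) =
      fun ω => (X ⁻¹' (f ⁻¹' {1})).indicator (fun _ => (1 : ℝ)) ω *
          (Y ⁻¹' {1}).indicator (fun _ => (1 : ℝ)) ω
        + (X ⁻¹' (f ⁻¹' {1}))ᶜ.indicator (fun _ => (1 : ℝ)) ω *
          (Y ⁻¹' {0}).indicator (fun _ => (1 : ℝ)) ω := by
    funext ω
    rcases hf01 (X ω) with hfx | hfx <;> rcases hY01 ω with hy | hy <;>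
      simp [Set.indicator_apply, Set.mem_preimage,
        Set.mem_singleton_iff, Set.mem_setOf_eq, Set.mem_compl_iff, hfx, hy]
  have main := stmt17_aux (MeasurableSpace.comap X inferInstance) hX.comap_le P
    (Δ ⁻¹' {1}) {ω | Y ω = f (X ω)} (Y ⁻¹' {1}) (Y ⁻¹' {0}) (X ⁻¹' (f ⁻¹' {1}))
    hAm hBm hB1m hB0m hCmX (fun ω => g (X ω)) hgXmX (fun ω => hgmem (X ω))
    hgA hciA1 hciA0 dec1 dec2
  rw [main]
  refine integral_congr_ae (Filter.Eventually.of_forall fun ω => ?_)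
  rcases hΔ01 ω with hd | hd
  · have hne : ω ∉ Δ ⁻¹' {1} ∩ {ω | Y ω = f (X ω)} := by simp [hd]
    simp [Set.indicator_of_notMem hne, hd]
  · have hUY : U ω = Y ω := by rw [hU ω, hd, one_mul]
    by_cases hb : Y ω = f (X ω)
    · have hmem : ω ∈ Δ ⁻¹' {1} ∩ {ω | Y ω = f (X ω)} := by
        exact ⟨by simp [hd], hb⟩
      have hmem' : ω ∈ {ω | U ω = f (X ω)} := by simp [Set.mem_setOf_eq, hUY, hb]
      simp [Set.indicator_of_mem hmem, Set.indicator_of_mem hmem', hd, div_eq_mul_inv,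
        one_div]
    · have hne : ω ∉ Δ ⁻¹' {1} ∩ {ω | Y ω = f (X ω)} := fun h => hb h.2
      have hne' : ω ∉ {ω | U ω = f (X ω)} := by simp [Set.mem_setOf_eq, hUY, hb]
      simp [Set.indicator_of_notMem hne, Set.indicator_of_notMem hne']
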